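/- Multiplicativity of the energy: let G and H be finite abstract simplicial complexes with connection matrices L(G) and L(H), and let L = L(G) ⊗ L(H) be their Kronecker (tensor) product, the matrix indexed by pairs (x,a) ∈ G × H with L((x,a),(y,b)) = L(G)(x,y)·L(H)(a,b), regarded over the rationals. Then L is invertible and the sum of all entries of L^{-1} equals χ(G)·χ(H). -/

import Mathlib

open Finset BigOperators Kronecker

/-- A finite abstract simplicial complex: a finite collection of nonempty finite
sets closed under taking nonempty subsets. -/
def IsComplex {α : Type*} [DecidableEq α] (G : Finset (Finset α)) : Prop :=
  (∀ x ∈ G, x.Nonempty) ∧ ∀ x ∈ G, ∀ y : Finset α, y.Nonempty → y ⊆ x → y ∈ G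

/-- ω(x) = (-1)^(|x|-1). -/
def omegaS {α : Type*} (x : Finset α) : ℤ := (-1) ^ (x.card - 1)

/-- Euler characteristic χ(G) = ∑_{x∈G} ω(x). -/
def chi {α : Type*} (G : Finset (Finset α)) : ℤ := ∑ x ∈ G, omegaS x

/-- The connection matrix over ℚ: L(x,y)=1 if x and y intersect, 0 otherwise. -/
def connL {α : Type*} [DecidableEq α] (G : Finset (Finset α)) :
    Matrix G G ℚ :=
  fun x y => if (x.1 ∩ y.1).Nonempty then 1 else 0

open Matrix in

lemma sum_omega_eq_one {α : Type*} [DecidableEq α] (s : Finset α) (hs : s.Nonempty) :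
    ∑ t ∈ s.powerset.filter (· ≠ ∅), (-1:ℚ)^(t.card - 1) = 1 := by
  have h : (∑ t ∈ s.powerset, (-1:ℚ)^t.card) = 0 := by
    have h := Finset.sum_powerset_neg_one_pow_card_of_nonempty (x := s) hs
    exact_mod_cast congrArg (fun z : ℤ => (z : ℚ)) h
  have h2 : (∑ t ∈ s.powerset.filter (· ≠ ∅), (-1:ℚ)^t.card) = -1 := by
    rw [← Finset.sum_filter_add_sum_filter_not s.powerset (· ≠ ∅) (fun t => (-1:ℚ)^t.card)] at h
    have hset : s.powerset.filter (fun t => ¬ t ≠ ∅) = ({∅} : Finset (Finset α)) := by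
      ext t
      simp only [Finset.mem_filter, Finset.mem_powerset, not_not, Finset.mem_singleton]
      exact ⟨fun h => h.2, fun h => ⟨h ▸ Finset.empty_subset s, h⟩⟩
    rw [hset, Finset.sum_singleton] at h
    simp only [Finset.card_empty, pow_zero] at h
    linarith
  calc ∑ t ∈ s.powerset.filter (· ≠ ∅), (-1:ℚ)^(t.card - 1)
      = ∑ t ∈ s.powerset.filter (· ≠ ∅), -((-1:ℚ)^t.card) := by
        refine Finset.sum_congr rfl fun t ht => ?_
        simp only [Finset.mem_filter] at ht
        have hc : 1 ≤ t.card := Finset.card_pos.2 (Finset.nonempty_iff_ne_empty.2 ht.2)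
        have : (-1:ℚ)^t.card = (-1)^(t.card - 1 + 1) := by rw [Nat.sub_add_cancel hc]
        rw [this, pow_succ]; ring
    _ = 1 := by rw [Finset.sum_neg_distrib, h2]; ring

lemma core_sum {γ : Type*} [DecidableEq γ] (K : Finset (Finset γ)) (hK : IsComplex K)
    (s u : Finset γ) (hu : u ∈ K) (hsu : s ⊆ u) :
    ∑ z : K, (if z.1 ⊆ s then (-1:ℚ)^(z.1.card-1) else 0)
      = if s.Nonempty then 1 else 0 := by
  have h1 : ∑ z : K, (if z.1 ⊆ s then (-1:ℚ)^(z.1.card-1) else 0)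
      = ∑ z ∈ K, (if z ⊆ s then (-1:ℚ)^(z.card-1) else 0) :=
    Finset.sum_coe_sort K (fun z => if z ⊆ s then (-1:ℚ)^(z.card-1) else 0)
  rw [h1, ← Finset.sum_filter]
  have hset : K.filter (· ⊆ s) = s.powerset.filter (· ≠ ∅) := by
    ext z
    simp only [Finset.mem_filter, Finset.mem_powerset]
    constructor
    · rintro ⟨hzK, hzs⟩
      exact ⟨hzs, Finset.nonempty_iff_ne_empty.1 (hK.1 z hzK)⟩
    · rintro ⟨hzs, hne⟩
      exact ⟨hK.2 u hu z (Finset.nonempty_iff_ne_empty.2 hne) (hzs.trans hsu), hzs⟩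
  rw [hset]
  by_cases hs : s.Nonempty
  · rw [if_pos hs]; exact sum_omega_eq_one s hs
  · rw [if_neg hs]
    rw [Finset.not_nonempty_iff_eq_empty] at hs
    subst hs
    simp [Finset.filter_singleton]

open Matrix in
lemma energy_single {γ : Type*} [DecidableEq γ] (K : Finset (Finset γ)) (hK : IsComplex K) :
    IsUnit (connL K).det ∧ ∑ x : K, ∑ y : K, (connL K)⁻¹ x y = (chi K : ℚ) := by
  classical
  set A : Matrix K K ℚ := Matrix.of (fun z x : K => if z.1 ⊆ x.1 then 1 else 0) with hA_def
  set w : K → ℚ := fun z => (-1)^(z.1.card - 1) with hw_def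
  have hwne : ∀ z : K, w z ≠ 0 := fun z => by
    simp [hw_def]
  -- factorization
  have hfact : connL K = Aᵀ * Matrix.diagonal w * A := by
    ext x y
    have hrhs : (Aᵀ * Matrix.diagonal w * A) x y
        = ∑ z : K, (if z.1 ⊆ x.1 ∩ y.1 then (-1:ℚ)^(z.1.card-1) else 0) := by
      rw [Matrix.mul_apply]
      refine Finset.sum_congr rfl fun z _ => ?_
      rw [Matrix.mul_diagonal, Matrix.transpose_apply]
      simp only [hA_def, Matrix.of_apply, hw_def]
      by_cases h1 : z.1 ⊆ x.1 <;> by_cases h2 : z.1 ⊆ y.1 <;>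
        simp [h1, h2, Finset.subset_inter_iff]
    rw [hrhs, core_sum K hK (x.1 ∩ y.1) x.1 x.2 Finset.inter_subset_left]
    rfl
  -- A is block triangular w.r.t. cardinality, with identity blocks
  have hbt : A.BlockTriangular (fun z : K => z.1.card) := by
    intro z x h
    simp only at h
    simp only [hA_def, Matrix.of_apply, ite_eq_right_iff]
    intro hsub
    exact absurd (Finset.card_le_card hsub) (not_le.2 h)
  have hAdet : A.det = 1 := by
    rw [hbt.det]
    refine Finset.prod_eq_one fun k _ => ?_
    have hblock : A.toSquareBlock (fun z : K => z.1.card) k = 1 := by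
      ext i j
      by_cases h : i = j
      · subst h
        simp [Matrix.toSquareBlock_def, hA_def, Matrix.one_apply]
      · have hij : i.1 ≠ j.1 := fun e => h (Subtype.ext e)
        have hcard : j.1.1.card = i.1.1.card := by rw [i.2, j.2]
        have hnsub : ¬ i.1.1 ⊆ j.1.1 := fun hsub =>
          hij (Subtype.ext (Finset.eq_of_subset_of_card_le hsub (le_of_eq hcard)))
        simp [Matrix.toSquareBlock_def, hA_def, Matrix.one_apply, h, hnsub]
        exact hnsub
    rw [hblock, Matrix.det_one]
  have hAunit : IsUnit A.det := by rw [hAdet]; exact isUnit_one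
  have hATunit : IsUnit Aᵀ.det := by rwa [Matrix.det_transpose]
  -- determinant of L
  have hLdet : IsUnit (connL K).det := by
    rw [hfact, Matrix.det_mul, Matrix.det_mul, Matrix.det_transpose, hAdet,
      Matrix.det_diagonal]
    rw [isUnit_iff_ne_zero]
    simpa using Finset.prod_ne_zero_iff.2 fun z _ => hwne z
  refine ⟨hLdet, ?_⟩
  -- the key vector identities
  have hvec1 : Aᵀ *ᵥ w = 1 := by
    funext x
    have : (Aᵀ *ᵥ w) x = ∑ z : K, (if z.1 ⊆ x.1 then (-1:ℚ)^(z.1.card-1) else 0) := by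
      simp only [Matrix.mulVec, dotProduct, Matrix.transpose_apply, hA_def,
        Matrix.of_apply, hw_def, ite_mul, one_mul, zero_mul]
    rw [this, core_sum K hK x.1 x.1 x.2 subset_rfl, if_pos (hK.1 x.1 x.2)]
    rfl
  have hvec2 : w ᵥ* A = 1 := by
    funext y
    have : (w ᵥ* A) y = ∑ z : K, (if z.1 ⊆ y.1 then (-1:ℚ)^(z.1.card-1) else 0) := by
      simp only [Matrix.vecMul, dotProduct, hA_def, Matrix.of_apply, hw_def,
        mul_ite, mul_one, mul_zero]
    rw [this, core_sum K hK y.1 y.1 y.2 subset_rfl, if_pos (hK.1 y.1 y.2)]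
    rfl
  -- inverse
  have hinv : (connL K)⁻¹ = A⁻¹ * ((Matrix.diagonal w)⁻¹ * Aᵀ⁻¹) := by
    rw [hfact, Matrix.mul_inv_rev, Matrix.mul_inv_rev]
  -- sum of entries
  have hsum1 : ∑ x : K, ∑ y : K, (connL K)⁻¹ x y
      = (1 : K → ℚ) ⬝ᵥ ((connL K)⁻¹ *ᵥ (1 : K → ℚ)) := by
    simp [dotProduct, Matrix.mulVec]
  rw [hsum1]
  have h2 : (connL K)⁻¹ *ᵥ (1 : K → ℚ) = (A⁻¹ * (Matrix.diagonal w)⁻¹) *ᵥ w := by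
    rw [← hvec1, hinv, Matrix.mulVec_mulVec]
    rw [mul_assoc, mul_assoc, Matrix.nonsing_inv_mul Aᵀ hATunit, mul_one]
  rw [h2, Matrix.dotProduct_mulVec]
  have h3 : (1 : K → ℚ) ᵥ* (A⁻¹ * (Matrix.diagonal w)⁻¹)
      = w ᵥ* (Matrix.diagonal w)⁻¹ := by
    rw [← hvec2, Matrix.vecMul_vecMul]
    rw [← mul_assoc, Matrix.mul_nonsing_inv A hAunit, one_mul]
  have hDinv : (Matrix.diagonal w)⁻¹ = Matrix.diagonal (fun z => (w z)⁻¹) := by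
    apply Matrix.inv_eq_right_inv
    rw [Matrix.diagonal_mul_diagonal]
    have : (fun z => w z * (w z)⁻¹) = fun _ : K => (1:ℚ) :=
      funext fun z => mul_inv_cancel₀ (hwne z)
    rw [this, Matrix.diagonal_one]
  rw [h3, hDinv]
  have h4 : (w ᵥ* Matrix.diagonal (fun z => (w z)⁻¹)) ⬝ᵥ w = ∑ z : K, w z := by
    simp only [dotProduct, Matrix.vecMul_diagonal]
    refine Finset.sum_congr rfl fun z _ => ?_
    rw [mul_inv_cancel₀ (hwne z), one_mul]
  rw [h4]
  have : (chi K : ℚ) = ∑ z ∈ K, (-1:ℚ)^(z.card - 1) := by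
    rw [chi]
    push_cast [omegaS]
    rfl
  rw [this, hw_def]
  exact Finset.sum_coe_sort K (fun z => (-1:ℚ)^(z.card - 1))

/-- Multiplicativity of the energy: the Kronecker product of the connection
matrices of two complexes is invertible, and the sum of the entries of its
inverse is χ(G)·χ(H). -/
theorem energy_multiplicative {α β : Type*} [DecidableEq α] [DecidableEq β]
    (G : Finset (Finset α)) (H : Finset (Finset β))
    (hG : IsComplex G) (hH : IsComplex H) :
    IsUnit (connL G ⊗ₖ connL H).det ∧
    ∑ p : G × H, ∑ q : G × H, (connL G ⊗ₖ connL H)⁻¹ p q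
      = (chi G : ℚ) * (chi H : ℚ) := by
  obtain ⟨hGu, hGs⟩ := energy_single G hG
  obtain ⟨hHu, hHs⟩ := energy_single H hH
  constructor
  · rw [Matrix.det_kronecker]
    exact (hGu.pow _).mul (hHu.pow _)
  · rw [Matrix.inv_kronecker]
    calc ∑ p : G × H, ∑ q : G × H, ((connL G)⁻¹ ⊗ₖ (connL H)⁻¹) p q
        = ∑ p : G × H, (∑ y : G, (connL G)⁻¹ p.1 y) * (∑ b : H, (connL H)⁻¹ p.2 b) := by
          refine Finset.sum_congr rfl fun p _ => ?_
          rw [Fintype.sum_prod_type, Finset.sum_mul_sum]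
          rfl
      _ = (∑ x : G, ∑ y : G, (connL G)⁻¹ x y) * (∑ a : H, ∑ b : H, (connL H)⁻¹ a b) := by
          rw [Fintype.sum_prod_type, Finset.sum_mul_sum]
      _ = (chi G : ℚ) * (chi H : ℚ) := by rw [hGs, hHs]
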